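/- Let ι be a type. Equip ℂ with the discrete topology, U := (ι →₀ ℂ) with the discrete topology, U* := (ι → ℂ) with the product topology, and V := U × U* with the product topology. Define B((u,φ),(u',φ')) := ∑_i φ i * u' i − ∑_i φ' i * u i (finite sums). Then: (1) for each v ∈ V the functional B(v, ·) : V → ℂ is continuous; (2) the map Φ_B : v ↦ B(v, ·) is a ℂ-linear bijection from V onto the space of all continuous ℂ-linear maps V → ℂ; (3) for every continuous ℂ-linear map f : V → V satisfying B(f v, w) + B(v, f w) = 0 for all v, w ∈ V, one has Φ_B(f v) = −(Φ_B v) ∘ f for all v ∈ V. -/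

import Mathlib

/-- The topology of the self-dual Tate space `V = U × U*`, where
`U = ι →₀ ℂ` is discrete and `U* = ι → ℂ` carries the product topology
over discrete `ℂ`. -/
noncomputable def VTopB (ι : Type*) : TopologicalSpace ((ι →₀ ℂ) × (ι → ℂ)) :=
  @instTopologicalSpaceProd _ _ (⊥ : TopologicalSpace (ι →₀ ℂ))
    (@Pi.topologicalSpace ι (fun _ => ℂ) (fun _ => (⊥ : TopologicalSpace ℂ)))

/-- The nondegenerate antisymmetric bilinear form
`B((u,φ),(u',φ')) = ∑_i φ i * u' i - ∑_i φ' i * u i` on `V = U × U*`. -/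
noncomputable def Bform (ι : Type*) (v w : (ι →₀ ℂ) × (ι → ℂ)) : ℂ :=
  w.1.sum (fun i a => v.2 i * a) - v.1.sum (fun i a => w.2 i * a)

/-- A function into discrete `ℂ` that is locally constant is continuous. -/
private lemma cont_to_bot {X : Type*} (t : TopologicalSpace X) (f : X → ℂ)
    (h : ∀ x, ∃ s : Set X, @IsOpen X t s ∧ x ∈ s ∧ ∀ y ∈ s, f y = f x) :
    @Continuous X ℂ t ⊥ f := by
  letI : TopologicalSpace X := t
  rw [@continuous_def X ℂ t ⊥ f]
  intro u _
  rw [isOpen_iff_forall_mem_open]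
  intro x hx
  obtain ⟨s, hs, hxs, hconst⟩ := h x
  exact ⟨s, fun y hy => by simpa [Set.mem_preimage, hconst y hy] using hx, hs, hxs⟩

private lemma sumR_add {ι : Type*} (f g : ι →₀ ℂ) (φ : ι → ℂ) :
    (f + g).sum (fun i a => φ i * a)
      = f.sum (fun i a => φ i * a) + g.sum (fun i a => φ i * a) :=
  Finsupp.sum_add_index' (fun _ => mul_zero _) (fun a b₁ b₂ => mul_add _ _ _)

private lemma sumR_smul {ι : Type*} (c : ℂ) (f : ι →₀ ℂ) (φ : ι → ℂ) :
    (c • f).sum (fun i a => φ i * a) = c * f.sum (fun i a => φ i * a) := by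
  rw [Finsupp.sum_smul_index' (fun i => mul_zero _), Finsupp.mul_sum]
  exact Finsupp.sum_congr fun i _ => by simp [smul_eq_mul]; ring

private lemma isOpen_bot' {α : Type*} (s : Set α) : @IsOpen α ⊥ s :=
  @isOpen_discrete α ⊥ (@DiscreteTopology.mk α ⊥ rfl) s

private lemma sum_pi_single {ι : Type*} [DecidableEq ι] (f : ι →₀ ℂ) (i : ι) :
    f.sum (fun j a => (Pi.single i (1:ℂ) : ι → ℂ) j * a) = f i := by
  have h1 : f.sum (fun j a => (Pi.single i (1:ℂ) : ι → ℂ) j * a)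
      = f.sum (fun j a => if j = i then a else 0) :=
    Finsupp.sum_congr fun j _ => by
      rcases eq_or_ne j i with h | h <;> simp [Pi.single_apply, h]
  rw [h1, Finsupp.sum_ite_eq' f i fun _ a => a]
  split_ifs with h
  · rfl
  · exact (Finsupp.notMem_support_iff.mp h).symm

theorem stmt3 (ι : Type*) :
    -- (1) each `B(v, ·)` is continuous
    (∀ v : (ι →₀ ℂ) × (ι → ℂ),
      @Continuous _ ℂ (VTopB ι) (⊥ : TopologicalSpace ℂ) (fun w => Bform ι v w)) ∧
    -- (2) `Φ_B` is a `ℂ`-linear bijection onto the continuous linear functionals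
    IsLinearMap ℂ (fun v : (ι →₀ ℂ) × (ι → ℂ) => (fun w => Bform ι v w)) ∧
    (∀ v : (ι →₀ ℂ) × (ι → ℂ), IsLinearMap ℂ (fun w => Bform ι v w)) ∧
    Function.Injective (fun v : (ι →₀ ℂ) × (ι → ℂ) => (fun w => Bform ι v w)) ∧
    (∀ g : ((ι →₀ ℂ) × (ι → ℂ)) →ₗ[ℂ] ℂ,
      @Continuous _ ℂ (VTopB ι) (⊥ : TopologicalSpace ℂ) g →
      ∃ v : (ι →₀ ℂ) × (ι → ℂ), ∀ w, g w = Bform ι v w) ∧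
    -- (3) equivariance for continuous `f ∈ 𝔰𝔭(V, B)`
    (∀ f : ((ι →₀ ℂ) × (ι → ℂ)) →ₗ[ℂ] ((ι →₀ ℂ) × (ι → ℂ)),
      @Continuous _ _ (VTopB ι) (VTopB ι) f →
      (∀ v w, Bform ι (f v) w + Bform ι v (f w) = 0) →
      ∀ v, (fun w => Bform ι (f v) w) = fun w => -(Bform ι v (f w))) := by
  classical
  refine ⟨?cont, ?linL, ?linR, ?inj, ?surj, ?equiv⟩
  case cont =>
    intro v
    apply cont_to_bot (VTopB ι)
    intro w₀
    refine ⟨({w₀.1} : Set (ι →₀ ℂ)) ×ˢ Set.pi (↑v.1.support) (fun i => {w₀.2 i}),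
      ?_, ?_, ?_⟩
    · exact @IsOpen.prod _ _ (⊥ : TopologicalSpace (ι →₀ ℂ))
        (@Pi.topologicalSpace ι (fun _ => ℂ) (fun _ => (⊥ : TopologicalSpace ℂ))) _ _
        (isOpen_bot' _)
        (@isOpen_set_pi ι (fun _ => ℂ) (fun _ => ⊥) _ _ (v.1.support.finite_toSet)
          (fun a _ => isOpen_bot' _))
    · exact ⟨rfl, fun i _ => rfl⟩
    · rintro y ⟨hy1, hy2⟩
      have h1 : y.1 = w₀.1 := hy1
      have h2 : v.1.sum (fun i a => y.2 i * a) = v.1.sum (fun i a => w₀.2 i * a) :=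
        Finsupp.sum_congr fun i hi => by rw [hy2 i hi]
      simp only [Bform, h1, h2]
  case linL =>
    constructor
    · intro v v'
      funext w
      simp only [Bform, Prod.fst_add, Prod.snd_add, Pi.add_apply, add_mul,
        Finsupp.sum_add, sumR_add]
      ring
    · intro c v
      funext w
      simp only [Pi.smul_apply, smul_eq_mul, Bform]
      rw [mul_sub]
      congr 1
      · rw [Finsupp.mul_sum]
        refine Finsupp.sum_congr fun i _ => ?_
        simp only [Prod.smul_snd, Pi.smul_apply, smul_eq_mul]
        ring
      · rw [show (c • v).1 = c • v.1 from rfl]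
        exact sumR_smul c v.1 w.2
  case linR =>
    intro v
    constructor
    · intro w w'
      simp only [Bform, Prod.fst_add, Prod.snd_add, Pi.add_apply, add_mul,
        Finsupp.sum_add, sumR_add]
      ring
    · intro c w
      simp only [Pi.smul_apply, smul_eq_mul, Bform]
      rw [mul_sub]
      congr 1
      · rw [show (c • w).1 = c • w.1 from rfl]
        exact sumR_smul c w.1 v.2
      · rw [Finsupp.mul_sum]
        refine Finsupp.sum_congr fun i _ => ?_
        simp only [Prod.smul_snd, Pi.smul_apply, smul_eq_mul]
        ring
  case inj =>
    intro v v' hv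
    have h2 : v.2 = v'.2 := by
      funext i
      have := congrFun hv (Finsupp.single i 1, (0 : ι → ℂ))
      simpa [Bform, Finsupp.sum_single_index] using this
    have h1 : v.1 = v'.1 := by
      ext i
      have := congrFun hv ((0 : ι →₀ ℂ), Pi.single i (1:ℂ))
      simpa [Bform, sum_pi_single] using this
    exact Prod.ext h1 h2
  case surj =>
    intro g hg
    have h0 : @IsOpen ℂ ⊥ {0} := isOpen_bot' _
    have hpre : @IsOpen _ (VTopB ι) (g ⁻¹' {0}) :=
      ((@continuous_def _ _ (VTopB ι) ⊥ g).mp hg) {0} h0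
    have hpre' : @IsOpen _ (@instTopologicalSpaceProd _ _ (⊥ : TopologicalSpace (ι →₀ ℂ))
        (@Pi.topologicalSpace ι (fun _ => ℂ) (fun _ => (⊥ : TopologicalSpace ℂ))))
        (g ⁻¹' {0}) := hpre
    have hmem : ((0 : ι →₀ ℂ), (0 : ι → ℂ)) ∈ g ⁻¹' {0} := by
      have : g 0 = 0 := map_zero g
      exact this
    obtain ⟨su, st, hsu, hst, hmu, hmt, hsub⟩ :=
      (@isOpen_prod_iff (ι →₀ ℂ) (ι → ℂ) ⊥
        (@Pi.topologicalSpace ι (fun _ => ℂ) (fun _ => ⊥)) _).mp hpre' 0 0 hmem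
    obtain ⟨I, uu, h1, h2⟩ :=
      (@isOpen_pi_iff ι (fun _ => ℂ) (fun _ => ⊥) st).mp hst 0 hmt
    have hzero : ∀ φ : ι → ℂ, (∀ i ∈ I, φ i = 0) → g (0, φ) = 0 := by
      intro φ hφ
      have hφt : φ ∈ st := h2 (fun i hi => by
        rw [hφ i hi]
        simpa using (h1 i hi).2)
      exact hsub ⟨hmu, hφt⟩
    set φ₀ : ι → ℂ := fun i => g (Finsupp.single i 1, 0) with hφ₀
    set c : ι → ℂ := fun i => -(g (0, Pi.single i 1)) with hc
    set u₀ : ι →₀ ℂ := Finsupp.onFinset I (fun i => if i ∈ I then c i else 0)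
      (fun i h => by by_contra hi; simp [hi] at h) with hu₀
    refine ⟨(u₀, φ₀), fun w => ?_⟩
    have hsupp : u₀.support ⊆ I := Finsupp.support_onFinset_subset
    -- split g w
    have hsplit : g w = g (w.1, 0) + g (0, w.2) := by
      rw [← map_add]
      congr 1
      · exact (Prod.ext (by simp) (by simp)).symm
    -- Step A
    have hA : g (w.1, 0) = w.1.sum (fun i a => φ₀ i * a) := by
      set L : (ι →₀ ℂ) →ₗ[ℂ] ℂ := g.comp (LinearMap.inl ℂ (ι →₀ ℂ) (ι → ℂ)) with hL
      have hgL : g (w.1, 0) = L w.1 := rfl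
      rw [hgL]
      conv_lhs => rw [← Finsupp.sum_single w.1]
      rw [map_finsuppSum]
      refine Finsupp.sum_congr fun i _ => ?_
      rw [← Finsupp.smul_single_one i (w.1 i), map_smul, smul_eq_mul]
      have : L (Finsupp.single i 1) = φ₀ i := rfl
      rw [this, mul_comm]
    -- Step B
    have hB : g (0, w.2) = -(u₀.sum fun i a => w.2 i * a) := by
      have hRHS : u₀.sum (fun i a => w.2 i * a) = ∑ i ∈ I, w.2 i * c i := by
        rw [Finsupp.sum_of_support_subset u₀ hsupp _ (fun i _ => mul_zero _)]
        refine Finset.sum_congr rfl fun i hi => ?_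
        rw [hu₀]
        simp [Finsupp.onFinset_apply, hi]
      set φI : ι → ℂ := fun j => if j ∈ I then w.2 j else 0 with hφI
      have hwI : g (0, w.2) = g (0, φI) := by
        have hdiff : g (0, w.2) - g (0, φI) = g (0, w.2 - φI) := by
          rw [← map_sub]
          congr 1
          exact Prod.ext (by simp) rfl
        have hz : g (0, w.2 - φI) = 0 :=
          hzero _ (fun i hi => by simp [hφI, hi])
        exact sub_eq_zero.mp (hdiff.trans hz)
      have hgφI : g (0, φI) = ∑ i ∈ I, w.2 i * g (0, Pi.single i 1) := by
        have hφIsum : φI = ∑ i ∈ I, w.2 i • (Pi.single i 1 : ι → ℂ) := by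
          funext j
          simp [hφI, Pi.single_apply, Finset.sum_apply, mul_ite, mul_one, mul_zero,
            Finset.sum_ite_eq]
        have hR : g (0, φI) = (g.comp (LinearMap.inr ℂ (ι →₀ ℂ) (ι → ℂ))) φI := rfl
        rw [hR, hφIsum, map_sum]
        exact Finset.sum_congr rfl fun i _ => by rw [map_smul, smul_eq_mul]; rfl
      rw [hwI, hgφI, hRHS]
      simp only [hc, mul_neg]
      simp
    rw [hsplit, hA, hB]
    simp only [Bform]
    ring
  case equiv =>
    intro f hf hB v
    funext w
    exact eq_neg_of_add_eq_zero_left (hB v w)
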